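/- Let r be a positive integer and let θ > 0 be real. If x = 2·cosh(θ) − 2, then q_r(x) = sinh(r·θ)/sinh(θ), where q_r(x) = ∏_{j=1}^{r-1} (x + λ_j(r)) (interpreted as the empty product when r = 1). -/

import Mathlib

open Real Finset

/-- `pathEig r j = λ_j(r) = 2 - 2 cos (π j / r)`. -/
noncomputable def pathEig (r j : ℕ) : ℝ := 2 - 2 * Real.cos (π * j / r)

/-- `qPoly r x = ∏_{j=1}^{r-1} (x + λ_j(r))` (the empty product when `r = 1`). -/
noncomputable def qPoly (r : ℕ) (x : ℝ) : ℝ :=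
  ∏ j ∈ Finset.Icc 1 (r - 1), (x + pathEig r j)

lemma two_cos_complex (t : ℝ) :
    Complex.exp (t * Complex.I) + Complex.exp (-(t * Complex.I))
      = 2 * (Real.cos t : ℂ) := by
  have h : -(((t : ℂ)) * Complex.I) = ((-t : ℝ) : ℂ) * Complex.I := by push_cast; ring
  rw [h, Complex.exp_mul_I, Complex.exp_mul_I]
  simp only [← Complex.ofReal_cos, ← Complex.ofReal_sin, Real.cos_neg, Real.sin_neg]
  push_cast
  ring

/-- Key factorization over ℝ, obtained by complexifying. -/
lemma key_prod (m : ℕ) (w : ℝ) :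
    w ^ (2 * (m + 1)) - 1
      = (w - 1) * (w + 1) *
        ∏ k ∈ Finset.range m, (w ^ 2 - 2 * Real.cos (π * (k + 1) / (m + 1)) * w + 1) := by
  set n : ℕ := 2 * (m + 1) with hn
  set ζ : ℂ := Complex.exp (2 * π * Complex.I / n) with hζdef
  have hn0 : n ≠ 0 := by omega
  have hζ : IsPrimitiveRoot ζ n := Complex.isPrimitiveRoot_exp n hn0
  have hζne : ζ ≠ 0 := Complex.exp_ne_zero _
  have hζn : ζ ^ n = 1 := hζ.pow_eq_one
  -- ζ ^ j = exp (π j / (m+1) * I)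
  have hζpow : ∀ j : ℕ, ζ ^ j = Complex.exp ((π * j / (m + 1) : ℝ) * Complex.I) := by
    intro j
    rw [hζdef, ← Complex.exp_nat_mul]
    congr 1
    have hm : ((m : ℂ) + 1) ≠ 0 := Nat.cast_add_one_ne_zero m
    push_cast [hn]
    field_simp
  have hζhalf : ζ ^ (m + 1) = -1 := by
    rw [hζpow (m + 1)]
    have h2 : (π * ((m + 1 : ℕ) : ℝ) / ((m : ℝ) + 1)) = π := by
      have hm : ((m : ℝ) + 1) ≠ 0 := by positivity
      push_cast
      field_simp
    rw [h2]
    exact_mod_cast Complex.exp_pi_mul_I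
  -- polynomial factorization evaluated at w
  have hpoly := X_pow_sub_C_eq_prod hζ (Nat.pos_of_ne_zero hn0) (one_pow n)
  have h1 : ((w : ℂ)) ^ n - 1 = ∏ k ∈ Finset.range n, ((w : ℂ) - ζ ^ k) := by
    have := congrArg (Polynomial.eval (w : ℂ)) hpoly
    simpa [Polynomial.eval_prod] using this
  set f : ℕ → ℂ := fun k => (w : ℂ) - ζ ^ k with hf
  have hsplit : ∏ k ∈ Finset.range n, f k
      = ((∏ k ∈ Finset.range m, f (k + 1)) * f 0) *
        ((∏ k ∈ Finset.range m, f ((m + 1) + (k + 1))) * f ((m + 1) + 0)) := by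
    rw [show n = (m + 1) + (m + 1) by omega, Finset.prod_range_add,
      Finset.prod_range_succ' f m, Finset.prod_range_succ' (fun k => f ((m + 1) + k)) m]
  have hreflect : ∏ k ∈ Finset.range m, f ((m + 1) + (k + 1))
      = ∏ k ∈ Finset.range m, f (n - (k + 1)) := by
    rw [← Finset.prod_range_reflect (fun k => f ((m + 1) + (k + 1))) m]
    apply Finset.prod_congr rfl
    intro k hk
    simp only [Finset.mem_range] at hk
    congr 1
    omega
  have hpair : ∀ k ∈ Finset.range m,
      f (k + 1) * f (n - (k + 1))
        = (w : ℂ) ^ 2 - 2 * (Real.cos (π * (k + 1) / (m + 1)) : ℝ) * w + 1 := by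
    intro k hk
    simp only [Finset.mem_range] at hk
    have hle : k + 1 ≤ n := by omega
    have hinv : ζ ^ (n - (k + 1)) = (ζ ^ (k + 1))⁻¹ := by
      rw [pow_sub₀ ζ hζne hle, hζn, one_mul]
    have h2 : ζ ^ (k + 1) + ζ ^ (n - (k + 1))
        = 2 * ((Real.cos (π * (k + 1) / (m + 1))) : ℂ) := by
      rw [hinv, hζpow (k + 1), ← Complex.exp_neg]
      have ht := two_cos_complex (π * (↑(k + 1) : ℝ) / (m + 1))
      push_cast at ht ⊢
      exact ht
    have h3 : ζ ^ (k + 1) * ζ ^ (n - (k + 1)) = 1 := by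
      rw [← pow_add, show k + 1 + (n - (k + 1)) = n by omega, hζn]
    simp only [hf]
    linear_combination (-(w : ℂ)) * h2 + h3
  have h0 : f 0 = (w : ℂ) - 1 := by simp [hf]
  have hm1 : f ((m + 1) + 0) = (w : ℂ) + 1 := by
    simp only [hf, Nat.add_zero, hζhalf]
    ring
  have hAB : (∏ k ∈ Finset.range m, f (k + 1)) * (∏ k ∈ Finset.range m, f (n - (k + 1)))
      = ∏ k ∈ Finset.range m,
          ((w : ℂ) ^ 2 - 2 * (Real.cos (π * (k + 1) / (m + 1)) : ℝ) * w + 1) := by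
    rw [← Finset.prod_mul_distrib]
    exact Finset.prod_congr rfl hpair
  have hmain : ((w : ℂ)) ^ n - 1
      = ((w : ℂ) - 1) * ((w : ℂ) + 1) *
        ∏ k ∈ Finset.range m,
          ((w : ℂ) ^ 2 - 2 * (Real.cos (π * (k + 1) / (m + 1)) : ℝ) * w + 1) := by
    rw [h1, hsplit, hreflect, h0, hm1, ← hAB]
    ring
  exact_mod_cast hmain

theorem qPoly_hyperbolic (r : ℕ) (hr : 0 < r) (θ x : ℝ) (hθ : 0 < θ)
    (hx : x = 2 * Real.cosh θ - 2) :
    qPoly r x = Real.sinh (r * θ) / Real.sinh θ := by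
  obtain ⟨m, rfl⟩ : ∃ m, r = m + 1 := ⟨r - 1, (Nat.succ_pred_eq_of_pos hr).symm⟩
  set w : ℝ := Real.exp θ with hw
  have hw1 : 1 < w := by rw [hw, ← Real.exp_zero]; exact Real.exp_lt_exp.mpr hθ
  have hw0 : 0 < w := by linarith
  have hwne : w ≠ 0 := ne_of_gt hw0
  have hcoshw : Real.cosh θ = (w + w⁻¹) / 2 := by rw [Real.cosh_eq, Real.exp_neg]
  -- qPoly as a product of quadratics divided by w^m
  have hq : qPoly (m + 1) x
      = (∏ k ∈ Finset.range m,
          (w ^ 2 - 2 * Real.cos (π * (k + 1) / (m + 1)) * w + 1)) / w ^ m := by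
    unfold qPoly pathEig
    rw [show (m + 1) - 1 = m from rfl, ← Finset.Ico_add_one_right_eq_Icc, Finset.prod_Ico_eq_prod_range,
      show m + 1 - 1 = m from rfl]
    have hfac : ∀ k ∈ Finset.range m,
        x + (2 - 2 * Real.cos (π * ((1 + k : ℕ) : ℝ) / ((m + 1 : ℕ) : ℝ)))
          = (w ^ 2 - 2 * Real.cos (π * ((k : ℝ) + 1) / ((m : ℝ) + 1)) * w + 1) / w := by
      intro k hk
      have hang : π * ((1 + k : ℕ) : ℝ) / ((m + 1 : ℕ) : ℝ)
          = π * ((k : ℝ) + 1) / ((m : ℝ) + 1) := by push_cast; ring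
      rw [hx, hang, hcoshw]
      field_simp
      ring
    rw [Finset.prod_congr rfl hfac, Finset.prod_div_distrib, Finset.prod_const,
      Finset.card_range]
  have hkey := key_prod m w
  have hsθ : Real.sinh θ = (w - w⁻¹) / 2 := by rw [Real.sinh_eq, Real.exp_neg]
  have hsr : Real.sinh (((m + 1 : ℕ) : ℝ) * θ)
      = (w ^ (m + 1) - (w ^ (m + 1))⁻¹) / 2 := by
    rw [Real.sinh_eq, Real.exp_neg, Real.exp_nat_mul]
  have hW2 : w ^ (2 * (m + 1)) = (w ^ (m + 1)) ^ 2 := by rw [Nat.mul_comm, pow_mul]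
  rw [hW2] at hkey
  have hWm : w ^ (m + 1) = w * w ^ m := by ring
  have hwm : w ^ m ≠ 0 := pow_ne_zero _ hwne
  have hWne : w ^ (m + 1) ≠ 0 := pow_ne_zero _ hwne
  have hsθne : Real.sinh θ ≠ 0 := by
    rw [hsθ]
    have hinv : w⁻¹ < 1 := by rw [inv_lt_one_iff₀]; right; exact hw1
    intro h
    nlinarith
  have h1ne : w - 1 ≠ 0 := by linarith
  have h2ne : w + 1 ≠ 0 := by linarith
  have h3ne : w * w - 1 ≠ 0 := by nlinarith
  rw [hq, hsr, hsθ]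
  rw [hWm] at hkey ⊢
  field_simp
  rw [eq_div_iff (by nlinarith)]
  rw [Finset.prod_congr (s₁ := Finset.range m) rfl (fun (k : ℕ) _ => show w * (w - 2 * Real.cos (π * ((k : ℝ) + 1) / ((m : ℝ) + 1))) + 1
    = w ^ 2 - 2 * Real.cos (π * ((k : ℝ) + 1) / ((m : ℝ) + 1)) * w + 1 by ring)]
  linear_combination (-1) * hkey
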